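/- For any tight IC POVM on ℂ^d, the average purity 𝓅 satisfies 1/d < 𝓅 ≤ 1, hence α = (d²𝓅 − d)/(d²−1) satisfies 0 < α ≤ d/(d+1), and α = d/(d+1) (equivalently 𝓅 = 1) holds if and only if every outcome has rank one. -/

import Mathlib

open Matrix ComplexOrder

noncomputable section

abbrev Mat (d : ℕ) := Matrix (Fin d) (Fin d) ℂ

/-- The real vector space of Hermitian `d × d` complex matrices. -/
abbrev HermM (d : ℕ) : Submodule ℝ (Mat d) := selfAdjoint.submodule ℝ (Mat d)


set_option maxRecDepth 4000
set_option synthInstance.maxHeartbeats 1000000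
set_option maxHeartbeats 8000000

def skewEquivSelf (d : ℕ) : skewAdjoint (Mat d) ≃ₗ[ℝ] selfAdjoint (Mat d) where
  toFun x := ⟨Complex.I • (x : Mat d), by
    have hx : star (x : Mat d) = -(x : Mat d) := x.2
    rw [selfAdjoint.mem_iff, star_smul, hx, Complex.star_def, Complex.conj_I, neg_smul,
      smul_neg, neg_neg]⟩
  invFun y := ⟨(-Complex.I) • (y : Mat d), by
    have hy : star (y : Mat d) = (y : Mat d) := y.2
    rw [skewAdjoint.mem_iff, star_smul, hy, star_neg, Complex.star_def, Complex.conj_I,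
      neg_neg, neg_smul, neg_neg]⟩
  map_add' x y := by
    ext : 1
    show Complex.I • ((x : Mat d) + (y : Mat d)) = Complex.I • (x : Mat d) + Complex.I • (y : Mat d)
    rw [smul_add]
  map_smul' r x := by
    ext : 1
    show Complex.I • (r • (x : Mat d)) = r • (Complex.I • (x : Mat d))
    rw [smul_comm]
  left_inv x := by
    ext : 1
    show (-Complex.I) • Complex.I • (x : Mat d) = (x : Mat d)
    rw [smul_smul]; simp
  right_inv y := by
    ext : 1
    show Complex.I • (-Complex.I) • (y : Mat d) = (y : Mat d)
    rw [smul_smul]; simp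

instance (d : ℕ) : Module.Finite ℝ (selfAdjoint (Mat d)) :=
  inferInstanceAs (Module.Finite ℝ (HermM d))

instance (d : ℕ) : Module.Finite ℝ (skewAdjoint (Mat d)) :=
  Module.Finite.equiv (skewEquivSelf d).symm

lemma finrank_hermM (d : ℕ) : Module.finrank ℝ (HermM d) = d ^ 2 := by
  have e := StarModule.decomposeProdAdjoint ℝ (Mat d)
  have h1 : Module.finrank ℝ (Mat d) = 2 * d ^ 2 := by
    rw [Module.finrank_matrix, Complex.finrank_real_complex]
    simp [Fintype.card_fin]; ring
  have h2 : Module.finrank ℝ (Mat d) =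
      Module.finrank ℝ (selfAdjoint (Mat d)) + Module.finrank ℝ (skewAdjoint (Mat d)) := by
    rw [e.finrank_eq, Module.finrank_prod]
  have h3 : Module.finrank ℝ (skewAdjoint (Mat d)) = Module.finrank ℝ (selfAdjoint (Mat d)) :=
    (skewEquivSelf d).symm.finrank_eq.symm
  have h4 : Module.finrank ℝ (HermM d) = Module.finrank ℝ (selfAdjoint (Mat d)) := rfl
  omega

lemma trace_smulRight' {M : Type*} [AddCommGroup M] [Module ℝ M] [Module.Free ℝ M]
    [Module.Finite ℝ M] (f : M →ₗ[ℝ] ℝ) (a : M) :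
    LinearMap.trace ℝ M (f.smulRight a) = f a := by
  have h : f.smulRight a = (LinearMap.toSpanSingleton ℝ M a) ∘ₗ f := by
    ext x; simp [LinearMap.toSpanSingleton_apply]
  rw [h, LinearMap.trace_comp_comm']
  have h2 : f ∘ₗ LinearMap.toSpanSingleton ℝ M a = f a • LinearMap.id := by
    apply LinearMap.ext_ring
    simp [LinearMap.toSpanSingleton_apply]
  rw [h2, LinearMap.map_smul, LinearMap.trace_id]
  simp

lemma trace_re_eq_sum {d : ℕ} {A : Mat d} (hA : A.IsHermitian) :
    (Matrix.trace A).re = ∑ i, hA.eigenvalues i := by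
  conv_lhs => rw [hA.spectral_theorem, Unitary.conjStarAlgAut_apply]
  rw [Matrix.trace_mul_comm, ← mul_assoc, Unitary.coe_star_mul_self, one_mul, Matrix.trace_diagonal]
  rw [Complex.re_sum]
  simp

lemma trace_sq_re_eq_sum {d : ℕ} {A : Mat d} (hA : A.IsHermitian) :
    (Matrix.trace (A * A)).re = ∑ i, hA.eigenvalues i ^ 2 := by
  conv_lhs => rw [hA.spectral_theorem, Unitary.conjStarAlgAut_apply]
  have h : ((hA.eigenvectorUnitary : Mat d) * diagonal (RCLike.ofReal ∘ hA.eigenvalues) *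
      (star hA.eigenvectorUnitary : Mat d)) *
      ((hA.eigenvectorUnitary : Mat d) * diagonal (RCLike.ofReal ∘ hA.eigenvalues) *
      (star hA.eigenvectorUnitary : Mat d)) =
      (hA.eigenvectorUnitary : Mat d) *
        (diagonal (RCLike.ofReal ∘ hA.eigenvalues) * diagonal (RCLike.ofReal ∘ hA.eigenvalues)) *
      (star hA.eigenvectorUnitary : Mat d) := by
    have hu : (star hA.eigenvectorUnitary : Mat d) * (hA.eigenvectorUnitary : Mat d) = 1 :=
      Unitary.coe_star_mul_self _
    calc _ = (hA.eigenvectorUnitary : Mat d) * diagonal (RCLike.ofReal ∘ hA.eigenvalues) *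
        ((star hA.eigenvectorUnitary : Mat d) * (hA.eigenvectorUnitary : Mat d)) *
        diagonal (RCLike.ofReal ∘ hA.eigenvalues) * (star hA.eigenvectorUnitary : Mat d) := by
          noncomm_ring
      _ = _ := by rw [hu]; noncomm_ring
  rw [h, Matrix.trace_mul_comm, ← mul_assoc, Unitary.coe_star_mul_self, one_mul,
    Matrix.diagonal_mul_diagonal, Matrix.trace_diagonal, Complex.re_sum]
  simp [sq]

lemma psd_purity {d : ℕ} {A : Mat d} (hA : A.PosSemidef) (ht : 0 < (Matrix.trace A).re) :
    0 < (Matrix.trace (A * A)).re ∧ (Matrix.trace (A * A)).re ≤ (Matrix.trace A).re ^ 2 ∧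
    ((Matrix.trace (A * A)).re = (Matrix.trace A).re ^ 2 ↔ A.rank = 1) := by
  have hH := hA.1
  set l := hH.eigenvalues with hl
  have hnn : ∀ i, 0 ≤ l i := hA.eigenvalues_nonneg
  have h1 : (Matrix.trace A).re = ∑ i, l i := trace_re_eq_sum hH
  have h2 : (Matrix.trace (A * A)).re = ∑ i, l i ^ 2 := trace_sq_re_eq_sum hH
  set S := ∑ i, l i with hS
  have hSpos : 0 < S := h1 ▸ ht
  have hle : ∀ i, l i ≤ S := fun i => Finset.single_le_sum (fun j _ => hnn j) (Finset.mem_univ i)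
  -- existence of a positive eigenvalue
  obtain ⟨i0, hi0⟩ : ∃ i, 0 < l i := by
    by_contra hcon
    push_neg at hcon
    have : S ≤ 0 := Finset.sum_nonpos (fun i _ => hcon i)
    linarith
  refine ⟨?_, ?_, ?_⟩
  · rw [h2]
    have : l i0 ^ 2 ≤ ∑ i, l i ^ 2 :=
      Finset.single_le_sum (f := fun i => l i ^ 2) (fun j _ => sq_nonneg _) (Finset.mem_univ i0)
    nlinarith
  · rw [h1, h2]
    have : ∀ i ∈ Finset.univ, l i ^ 2 ≤ l i * S := fun i _ => by
      rw [sq]; exact mul_le_mul_of_nonneg_left (hle i) (hnn i)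
    calc ∑ i, l i ^ 2 ≤ ∑ i, l i * S := Finset.sum_le_sum this
      _ = S ^ 2 := by rw [← Finset.sum_mul, sq]
  · rw [h1, h2, hA.1.rank_eq_card_non_zero_eigs, ← hl]
    constructor
    · intro heq
      -- each l i (S - l i) = 0
      have hzero : ∀ i ∈ Finset.univ, l i * (S - l i) = 0 := by
        rw [← Finset.sum_eq_zero_iff_of_nonneg
          (fun i _ => mul_nonneg (hnn i) (sub_nonneg.2 (hle i)))]
        have : ∑ i, l i * (S - l i) = (∑ i, l i) * S - ∑ i, l i ^ 2 := by
          simp only [mul_sub, ← sq]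
          rw [Finset.sum_sub_distrib, ← Finset.sum_mul, ← hS]
        rw [this, ← hS, heq]; ring
      rw [Fintype.card_eq_one_iff]
      refine ⟨⟨i0, ne_of_gt hi0⟩, ?_⟩
      rintro ⟨i, hi⟩
      by_cases hif : i = i0
      · exact Subtype.ext hif
      · exfalso
        have hiS : l i = S := by
          rcases mul_eq_zero.1 (hzero i (Finset.mem_univ i)) with h | h
          · exact absurd h hi
          · linarith
        have hi0S : l i0 = S := by
          rcases mul_eq_zero.1 (hzero i0 (Finset.mem_univ i0)) with h | h
          · exact absurd h (ne_of_gt hi0)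
          · linarith
        have hpair : l i + l i0 ≤ S := by
          have := Finset.sum_le_sum_of_subset_of_nonneg
            (Finset.subset_univ ({i, i0} : Finset (Fin d))) (fun j _ _ => hnn j)
          rwa [Finset.sum_pair hif] at this
        linarith
    · intro hcard
      obtain ⟨⟨j0, hj0⟩, huniq⟩ := Fintype.card_eq_one_iff.1 hcard
      have hzero : ∀ i, i ≠ j0 → l i = 0 := by
        intro i hne
        by_contra hi
        exact hne (congrArg Subtype.val (huniq ⟨i, hi⟩))
      have hSj : S = l j0 := by
        rw [hS]
        exact Finset.sum_eq_single j0 (fun b _ hb => hzero b hb) (fun h => absurd (Finset.mem_univ j0) h)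
      have hSq : ∑ i, l i ^ 2 = l j0 ^ 2 :=
        Finset.sum_eq_single j0 (fun b _ hb => by rw [hzero b hb]; ring)
          (fun h => absurd (Finset.mem_univ j0) h)
      rw [hSq, hSj]


/-- The identity matrix as a Hermitian matrix. -/
def hermOne (d : ℕ) : HermM d := ⟨1, IsSelfAdjoint.one (Mat d)⟩

/-- The superoperator `|A⟩⟩⟨⟨B| : X ↦ tr(B X) • A` on Hermitian matrices. -/
def outerSO (d : ℕ) (A B : HermM d) : HermM d →ₗ[ℝ] HermM d :=
  (Complex.reLm ∘ₗ Matrix.traceLinearMap (Fin d) ℝ ℂ ∘ₗ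
    LinearMap.mulLeft ℝ (B : Mat d) ∘ₗ (HermM d).subtype).smulRight A

lemma outerSO_apply (d : ℕ) (A B X : HermM d) :
    outerSO d A B X = ((Matrix.trace ((B : Mat d) * (X : Mat d))).re) • A := rfl

lemma trace_outerSO (d : ℕ) (A B : HermM d) :
    LinearMap.trace ℝ (HermM d) (outerSO d A B) =
      (Matrix.trace ((B : Mat d) * (A : Mat d))).re :=
  trace_smulRight' _ _


/-- For any tight IC POVM on ℂ^d, the average purity 𝓅 satisfies
1/d < 𝓅 ≤ 1, hence 0 < α ≤ d/(d+1); moreover α = d/(d+1) iff 𝓅 = 1 iff every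
outcome has rank one. -/
theorem tightIC_purity_bounds (d n : ℕ) (hd : 2 ≤ d)
    (P : Fin n → HermM d) (α β 𝓅 : ℝ)
    (hpsd : ∀ j, ((P j : Mat d)).PosSemidef)
    (htrpos : ∀ j, 0 < (Matrix.trace (P j : Mat d)).re)
    (hsum : ∑ j, (P j : Mat d) = 1)
    (hα : 0 < α)
    (hframe : (d : ℝ) • ∑ j, ((Matrix.trace (P j : Mat d)).re)⁻¹ • outerSO d (P j) (P j) =
      α • LinearMap.id + β • outerSO d (hermOne d) (hermOne d))
    (h𝓅 : 𝓅 = (∑ j, (Matrix.trace (P j : Mat d)).re *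
      ((Matrix.trace ((P j : Mat d) * (P j : Mat d))).re /
        (Matrix.trace (P j : Mat d)).re ^ 2)) / d) :
    (1 / (d : ℝ) < 𝓅 ∧ 𝓅 ≤ 1) ∧
    (0 < α ∧ α ≤ (d : ℝ) / (d + 1)) ∧
    (α = (d : ℝ) / (d + 1) ↔ 𝓅 = 1) ∧
    (α = (d : ℝ) / (d + 1) ↔ ∀ j, (P j : Mat d).rank = 1) := by
  set t : Fin n → ℝ := fun j => (Matrix.trace (P j : Mat d)).re with htdef
  set s : Fin n → ℝ := fun j => (Matrix.trace ((P j : Mat d) * (P j : Mat d))).re with hsdef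
  have hD : (2:ℝ) ≤ (d:ℝ) := by exact_mod_cast hd
  have hDpos : (0:ℝ) < (d:ℝ) := by linarith
  have hDne : (d:ℝ) ≠ 0 := ne_of_gt hDpos
  have htne : ∀ j, t j ≠ 0 := fun j => ne_of_gt (htrpos j)
  have hp : ∀ j, 0 < s j ∧ s j ≤ t j ^ 2 ∧ (s j = t j ^ 2 ↔ (P j : Mat d).rank = 1) :=
    fun j => psd_purity (hpsd j) (htrpos j)
  -- sum of traces equals d
  have htsum : ∑ j, t j = (d:ℝ) := by
    have h := congrArg (fun M : Mat d => (Matrix.trace M).re) hsum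
    simpa [Matrix.trace_sum, Complex.re_sum, Matrix.trace_one, htdef] using h
  -- coe of the sum of outcomes
  have hone : ((∑ j, P j : HermM d) : Mat d) = 1 := by
    rw [AddSubmonoidClass.coe_finset_sum]; exact hsum
  -- Equation 1 : evaluate the frame identity at the identity matrix
  have hL : ((d : ℝ) • ∑ j, (t j)⁻¹ • outerSO d (P j) (P j)) (hermOne d)
      = (d : ℝ) • ∑ j, P j := by
    rw [LinearMap.smul_apply, LinearMap.sum_apply]
    congr 1
    refine Finset.sum_congr rfl fun j _ => ?_
    rw [LinearMap.smul_apply, outerSO_apply]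
    have h1 : ((P j : Mat d) * ((hermOne d : HermM d) : Mat d)) = (P j : Mat d) := mul_one _
    rw [h1, smul_smul]
    show ((t j)⁻¹ * t j) • P j = P j
    rw [inv_mul_cancel₀ (htne j), one_smul]
  have hone_tr : ((hermOne d : HermM d) : Mat d) = (1 : Mat d) := rfl
  have happ := LinearMap.congr_fun hframe (hermOne d)
  rw [hL] at happ
  have heq1 : (d:ℝ) * (d:ℝ) = α * (d:ℝ) + β * (d:ℝ) * (d:ℝ) := by
    have h := congrArg (fun X : HermM d => (Matrix.trace (X : Mat d)).re) happ
    simp only [LinearMap.add_apply, LinearMap.smul_apply, LinearMap.id_apply,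
      outerSO_apply] at h
    have h11 : (((hermOne d : HermM d) : Mat d) * ((hermOne d : HermM d) : Mat d)) =
        (1 : Mat d) := mul_one _
    rw [h11] at h
    simp only [SetLike.val_smul, hone, AddSubgroup.coe_add, Submodule.coe_add, hone_tr, smul_smul,
      Matrix.trace_smul, Matrix.trace_add, Matrix.trace_one, Fintype.card_fin,
      Complex.add_re, Complex.real_smul, Complex.mul_re, Complex.ofReal_re,
      Complex.ofReal_im, Complex.natCast_re, Complex.natCast_im] at h
    nlinarith [h]
  have hE1 : α + β * (d:ℝ) = (d:ℝ) := by
    have h : (α + β * (d:ℝ)) * (d:ℝ) = (d:ℝ) * (d:ℝ) := by linear_combination -heq1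
    exact mul_right_cancel₀ hDne h
  -- Equation 2 : take the superoperator trace of the frame identity
  have htr := congrArg (LinearMap.trace ℝ (HermM d)) hframe
  simp only [_root_.map_smul, map_sum, map_add, trace_outerSO, LinearMap.trace_id,
    finrank_hermM, smul_eq_mul, hone_tr, mul_one, Matrix.trace_one, Fintype.card_fin,
    Complex.natCast_re] at htr
  -- htr : d * ∑ j, (t j)⁻¹ * s j = α * d^2 + β * d
  set Q : ℝ := ∑ j, (t j)⁻¹ * s j with hQdef
  have hQp : 𝓅 = Q / d := by
    rw [h𝓅, hQdef]
    congr 1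
    refine Finset.sum_congr rfl fun j _ => ?_
    show t j * (s j / t j ^ 2) = (t j)⁻¹ * s j
    rw [inv_mul_eq_div, eq_div_iff (htne j)]
    have hinv : (t j)⁻¹ ^ 2 * t j ^ 2 = 1 := by
      rw [← mul_pow, inv_mul_cancel₀ (htne j), one_pow]
    calc t j * (s j / t j ^ 2) * t j = s j / t j ^ 2 * t j ^ 2 := by ring
      _ = s j * ((t j)⁻¹ ^ 2 * t j ^ 2) := by rw [div_eq_mul_inv]; ring
      _ = s j := by rw [hinv, mul_one]
  have hQ : Q = 𝓅 * (d:ℝ) := by rw [hQp]; field_simp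
  have hE2 : α * (d:ℝ) + β = (d:ℝ) * 𝓅 := by
    rw [hQ] at htr
    push_cast at htr
    have h : (α * (d:ℝ) + β) * (d:ℝ) = ((d:ℝ) * 𝓅) * (d:ℝ) := by linear_combination -htr
    exact mul_right_cancel₀ hDne h
  have key : α * ((d:ℝ)^2 - 1) = (d:ℝ)^2 * 𝓅 - (d:ℝ) := by
    linear_combination (d:ℝ) * hE2 - hE1
  -- purity bounds
  have hQle : Q ≤ (d:ℝ) := by
    rw [hQdef, ← htsum]
    refine Finset.sum_le_sum fun j _ => ?_
    rw [inv_mul_le_iff₀ (htrpos j)]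
    nlinarith [(hp j).2.1, sq_nonneg (t j)]
  have hple : 𝓅 ≤ 1 := by
    rw [hQp]
    rw [div_le_one hDpos]
    linarith
  have hd2pos : (0:ℝ) < (d:ℝ)^2 - 1 := by nlinarith
  have hpgt : 1 / (d:ℝ) < 𝓅 := by
    rw [div_lt_iff₀ hDpos]
    nlinarith [mul_pos hα hd2pos]
  have hαle : α ≤ (d:ℝ) / ((d:ℝ) + 1) := by
    rw [le_div_iff₀ (by linarith : (0:ℝ) < (d:ℝ) + 1)]
    nlinarith
  have hiff1 : α = (d:ℝ) / ((d:ℝ) + 1) ↔ 𝓅 = 1 := by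
    constructor
    · intro h
      rw [h] at key
      have h2 : (d:ℝ) / ((d:ℝ)+1) * ((d:ℝ)^2 - 1) = (d:ℝ) * ((d:ℝ) - 1) := by
        field_simp; ring
      rw [h2] at key
      have h3 : (d:ℝ)^2 * 𝓅 = (d:ℝ)^2 * 1 := by rw [mul_one]; nlinarith
      exact mul_left_cancel₀ (pow_ne_zero 2 hDne) h3
    · intro h
      rw [h] at key
      rw [eq_div_iff (by linarith : (d:ℝ) + 1 ≠ 0)]
      have h3 : (α * ((d:ℝ)+1)) * ((d:ℝ)-1) = (d:ℝ) * ((d:ℝ)-1) := by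
        linear_combination key
      exact mul_right_cancel₀ (by linarith : (d:ℝ)-1 ≠ 0) h3
  -- purity = 1 iff all rank one
  have hiff2 : 𝓅 = 1 ↔ ∀ j, (P j : Mat d).rank = 1 := by
    constructor
    · intro h
      have hQd : Q = (d:ℝ) := by rw [hQ, h]; ring
      have hzero : ∀ j ∈ Finset.univ, t j - (t j)⁻¹ * s j = 0 := by
        rw [← Finset.sum_eq_zero_iff_of_nonneg]
        · rw [Finset.sum_sub_distrib, ← hQdef, htsum, hQd]; ring
        · intro j _
          rw [sub_nonneg, inv_mul_le_iff₀ (htrpos j)]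
          nlinarith [(hp j).2.1]
      intro j
      rw [← (hp j).2.2]
      have h0 := hzero j (Finset.mem_univ j)
      have hts : s j = t j * t j := by
        have h1 : (t j)⁻¹ * s j = t j := by linarith
        calc s j = (t j * (t j)⁻¹) * s j := by rw [mul_inv_cancel₀ (htne j), one_mul]
          _ = t j * ((t j)⁻¹ * s j) := by ring
          _ = t j * t j := by rw [h1]
      rw [hts]; ring
    · intro h
      have hsq : ∀ j, s j = t j ^ 2 := fun j => ((hp j).2.2).2 (h j)
      have hQd : Q = (d:ℝ) := by
        rw [hQdef, ← htsum]
        refine Finset.sum_congr rfl fun j _ => ?_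
        rw [hsq j, sq, ← mul_assoc, inv_mul_cancel₀ (htne j), one_mul]
      rw [hQp, hQd, div_self hDne]
  exact ⟨⟨hpgt, hple⟩, ⟨hα, hαle⟩, hiff1, hiff1.trans hiff2⟩
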